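/- Let Φ be a positive-definite n×n real matrix, N a positive-definite m×m real matrix, and R an m×n real matrix of rank m (i.e. R is surjective). Set D = (Φ⁻¹ + Rᵀ N⁻¹ R)⁻¹ and W = D Rᵀ N⁻¹. Then W has trivial kernel, R W is invertible, and (Wᵀ D⁻¹ W)⁻¹ Wᵀ D⁻¹ = (R W)⁻¹ R. -/

import Mathlib

open Matrix

/-- **Simplification of the IFD data update.**
For the Wiener filter `W = D Rᵀ N⁻¹` with `D = (Φ⁻¹ + Rᵀ N⁻¹ R)⁻¹`, prior covariance
`Φ` positive definite, noise covariance `N` positive definite and surjective response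
`R`, the filter `W` has trivial kernel, `R W` is invertible, and
`(Wᵀ D⁻¹ W)⁻¹ Wᵀ D⁻¹ = (R W)⁻¹ R`. -/
theorem ifd_update_operator_simplification
    {n m : ℕ}
    (Φ : Matrix (Fin n) (Fin n) ℝ) (hΦ : Φ.PosDef)
    (N : Matrix (Fin m) (Fin m) ℝ) (hN : N.PosDef)
    (R : Matrix (Fin m) (Fin n) ℝ)
    (hR : Function.Surjective fun x : Fin n → ℝ => R *ᵥ x)
    (D : Matrix (Fin n) (Fin n) ℝ) (hD : D = (Φ⁻¹ + Rᵀ * N⁻¹ * R)⁻¹)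
    (W : Matrix (Fin n) (Fin m) ℝ) (hW : W = D * Rᵀ * N⁻¹) :
    (∀ x : Fin m → ℝ, W *ᵥ x = 0 → x = 0) ∧ IsUnit (R * W).det ∧
      (Wᵀ * D⁻¹ * W)⁻¹ * Wᵀ * D⁻¹ = (R * W)⁻¹ * R := by
  -- Rᵀ has trivial kernel since R is surjective.
  have hRt : ∀ y : Fin m → ℝ, Rᵀ *ᵥ y = 0 → y = 0 := by
    intro y hy
    obtain ⟨x, hx⟩ := hR y
    have h1 : y ⬝ᵥ (R *ᵥ x) = 0 := by
      rw [dotProduct_mulVec, ← mulVec_transpose, hy, zero_dotProduct]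
    rw [show R *ᵥ x = y from hx] at h1
    exact dotProduct_self_eq_zero.mp h1
  -- A := Φ⁻¹ + Rᵀ N⁻¹ R is positive definite.
  have hNinv : (N⁻¹).PosDef := hN.inv
  have hA : (Φ⁻¹ + Rᵀ * N⁻¹ * R).PosDef := by
    refine hΦ.inv.add_posSemidef ?_
    have := hNinv.posSemidef.conjTranspose_mul_mul_same R
    rwa [conjTranspose_eq_transpose_of_trivial] at this
  have hDpd : D.PosDef := hD ▸ hA.inv
  have hAdet : IsUnit (Φ⁻¹ + Rᵀ * N⁻¹ * R).det := hA.det_pos.ne'.isUnit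
  have hDinv : D⁻¹ = Φ⁻¹ + Rᵀ * N⁻¹ * R := by
    rw [hD, nonsing_inv_nonsing_inv _ hAdet]
  have hDdet : IsUnit D.det := hDpd.det_pos.ne'.isUnit
  have hNdet : IsUnit N.det := hN.det_pos.ne'.isUnit
  have hNinvdet : IsUnit (N⁻¹).det := hNinv.det_pos.ne'.isUnit
  -- symmetry of D and N⁻¹
  have hDsymm : Dᵀ = D := by
    have := hDpd.isHermitian.eq
    rwa [conjTranspose_eq_transpose_of_trivial] at this
  have hNinvsymm : (N⁻¹)ᵀ = N⁻¹ := by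
    have := hNinv.isHermitian.eq
    rwa [conjTranspose_eq_transpose_of_trivial] at this
  -- triviality of kernels via posdef
  have kerD : ∀ v : Fin n → ℝ, D *ᵥ v = 0 → v = 0 := by
    intro v hv
    by_contra h
    have := hDpd.dotProduct_mulVec_pos h
    rw [hv, dotProduct_zero] at this
    exact lt_irrefl _ this
  have kerNinv : ∀ v : Fin m → ℝ, N⁻¹ *ᵥ v = 0 → v = 0 := by
    intro v hv
    by_contra h
    have := hNinv.dotProduct_mulVec_pos h
    rw [hv, dotProduct_zero] at this
    exact lt_irrefl _ this
  have kerW : ∀ x : Fin m → ℝ, W *ᵥ x = 0 → x = 0 := by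
    intro x hx
    rw [hW, ← mulVec_mulVec, ← mulVec_mulVec] at hx
    exact kerNinv _ (hRt _ (kerD _ hx))
  -- G := R D Rᵀ is positive definite
  have hG : (R * D * Rᵀ).PosDef := by
    refine PosDef.of_dotProduct_mulVec_pos ?_ ?_
    · rw [Matrix.IsHermitian, conjTranspose_eq_transpose_of_trivial, transpose_mul,
        transpose_mul, transpose_transpose, hDsymm, Matrix.mul_assoc]
    · intro y hy
      have hy' : Rᵀ *ᵥ y ≠ 0 := fun h => hy (hRt y h)
      have hpos := hDpd.dotProduct_mulVec_pos hy'
      rw [star_trivial] at hpos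
      rw [star_trivial, ← Matrix.mulVec_mulVec, ← Matrix.mulVec_mulVec,
        dotProduct_mulVec, ← mulVec_transpose]
      exact hpos
  have hGdet : IsUnit (R * D * Rᵀ).det := hG.det_pos.ne'.isUnit
  have hRW : R * W = (R * D * Rᵀ) * N⁻¹ := by
    rw [hW]; simp only [Matrix.mul_assoc]
  have hWt : Wᵀ = N⁻¹ * R * D := by
    rw [hW, transpose_mul, transpose_mul, transpose_transpose, hDsymm, hNinvsymm,
      Matrix.mul_assoc]
  have h1 : Wᵀ * D⁻¹ = N⁻¹ * R := by
    rw [hWt, Matrix.mul_assoc (N⁻¹ * R) D D⁻¹, mul_nonsing_inv _ hDdet, Matrix.mul_one]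
  have h2 : Wᵀ * D⁻¹ * W = N⁻¹ * (R * D * Rᵀ) * N⁻¹ := by
    rw [h1, hW]; simp only [Matrix.mul_assoc]
  refine ⟨kerW, ?_, ?_⟩
  · rw [hRW, det_mul]; exact hGdet.mul hNinvdet
  · rw [Matrix.mul_assoc, h2, h1, hRW, Matrix.mul_inv_rev, Matrix.mul_inv_rev,
      Matrix.mul_inv_rev, nonsing_inv_nonsing_inv N hNdet]
    simp only [Matrix.mul_assoc]
    rw [mul_nonsing_inv_cancel_left _ _ hNdet]
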